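/- arXiv:1001.2343 — 2 statements merged into one kernel-verified Lean document; each statement's English description precedes it below -/
import Mathlib

section
/- Let L : ℝ → Mat(n,n,ℝ) be continuous, and for parameter α ∈ ℝ let L_α(t) = L(t) + α·M(t) with M continuous. Let Φ_α(t) be the solution of dΦ_α/dt = L_α(t)·Φ_α(t), Φ_α(0) = I. Then the map α ↦ Φ_α(t) is differentiable at α = 0, and ∂_α Φ_α(t)|_{α=0} = ∫₀ᵗ Φ₀(t)·Φ₀(τ)⁻¹·M(τ)·Φ₀(τ) dτ. -/
attribute [local instance] Matrix.linftyOpNormedRing Matrix.linftyOpNormedAlgebra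

open MeasureTheory intervalIntegral Real Set Asymptotics Filter

private lemma oepd_gronwallBound_le {K s t : ℝ} (hK : 0 ≤ K) (hs : 0 ≤ s) (hst : s ≤ t) :
    gronwallBound 0 K K s ≤ Real.exp (K * t) - 1 := by
  rcases eq_or_lt_of_le hK with h | h
  · rw [← h]; simp [gronwallBound]
  · simp only [gronwallBound_of_K_ne_0 (ne_of_gt h), zero_mul, zero_add,
      div_self (ne_of_gt h), one_mul]
    have := Real.exp_le_exp.2 (mul_le_mul_of_nonneg_left hst (le_of_lt h))
    linarith

private lemma oepd_aux {n : ℕ}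
    (L M : ℝ → Matrix (Fin n) (Fin n) ℝ) (hL : Continuous L) (hM : Continuous M)
    (Φ : ℝ → ℝ → Matrix (Fin n) (Fin n) ℝ)
    (hΦ0 : ∀ α : ℝ, Φ α 0 = 1)
    (hΦ : ∀ α t : ℝ, HasDerivAt (Φ α) ((L t + α • M t) * Φ α t) t)
    (hinv : ∀ t : ℝ, IsUnit (Φ 0 t)) (t : ℝ) (ht : 0 ≤ t) :
    HasDerivAt (fun α => Φ α t)
      (∫ τ in (0:ℝ)..t, Φ 0 t * (Φ 0 τ)⁻¹ * M τ * Φ 0 τ) 0 := by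
  have hdet : ∀ u : ℝ, IsUnit (Φ 0 u).det := fun u => (Matrix.isUnit_iff_isUnit_det _).1 (hinv u)
  set Inv : ℝ → Matrix (Fin n) (Fin n) ℝ := fun s => (Φ 0 s)⁻¹ with hInvdef
  have hmul : ∀ s, Φ 0 s * Inv s = 1 := fun s => Matrix.mul_nonsing_inv _ (hdet s)
  have hmul' : ∀ s, Inv s * Φ 0 s = 1 := fun s => Matrix.nonsing_inv_mul _ (hdet s)
  have hΦ' : ∀ s : ℝ, HasDerivAt (Φ 0) (L s * Φ 0 s) s := by
    intro s; simpa using hΦ 0 s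
  have contΦ : ∀ α, Continuous (Φ α) := fun α =>
    Differentiable.continuous (fun s => (hΦ α s).differentiableAt)
  -- derivative of the inverse
  have hInvDeriv : ∀ s : ℝ, HasDerivAt Inv (-(Inv s * L s)) s := by
    intro s
    have h := (hasFDerivAt_ringInverse (𝕜 := ℝ) (hinv s).unit).comp_hasDerivAt s (hΦ' s)
    have heq : (Ring.inverse ∘ (Φ 0)) = Inv := by
      funext y
      exact (Matrix.nonsing_inv_eq_ringInverse _).symm
    rw [heq] at h
    refine h.congr_deriv (Eq.symm ?_)
    rw [ContinuousLinearMap.neg_apply, ContinuousLinearMap.mulLeftRight_apply]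
    have hc : (↑(hinv s).unit⁻¹ : Matrix (Fin n) (Fin n) ℝ) = Inv s := by
      rw [← Ring.inverse_unit, IsUnit.unit_spec]
      exact (Matrix.nonsing_inv_eq_ringInverse _).symm
    rw [hc, neg_inj, mul_assoc, mul_assoc, hmul, mul_one]
  have contInv : Continuous Inv :=
    Differentiable.continuous (fun s => (hInvDeriv s).differentiableAt)
  set B : ℝ → Matrix (Fin n) (Fin n) ℝ := fun s => Inv s * M s * Φ 0 s with hBdef
  have contB : Continuous B := ((contInv.mul hM).mul (contΦ 0))
  set G : ℝ → ℝ → Matrix (Fin n) (Fin n) ℝ := fun α s => Inv s * Φ α s with hGdef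
  have hG0 : ∀ α, G α 0 = 1 := by
    intro α; simp only [hGdef, hΦ0, mul_one, hInvdef, inv_one]
  have hGderiv : ∀ α s : ℝ, HasDerivAt (G α) (α • (B s * G α s)) s := by
    intro α s
    have h := (hInvDeriv s).mul (hΦ α s)
    refine h.congr_deriv ?_
    have h1 : B s * G α s = Inv s * (M s * Φ α s) := by
      rw [hBdef, hGdef]
      rw [mul_assoc (Inv s * M s), ← mul_assoc (Φ 0 s), hmul, one_mul, mul_assoc]
    rw [h1]
    simp only [add_mul, mul_add, smul_mul_assoc, mul_smul_comm, neg_mul, mul_assoc]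
    abel
  have contG : ∀ α, Continuous (G α) := fun α => contInv.mul (contΦ α)
  have contBG : ∀ α, Continuous (fun s => B s * G α s) := fun α => contB.mul (contG α)
  -- integral equation
  have hintEq : ∀ α : ℝ, ∀ s : ℝ, G α s - 1 = α • ∫ τ in (0:ℝ)..s, B τ * G α τ := by
    intro α s
    have h := intervalIntegral.integral_eq_sub_of_hasDerivAt
      (f := G α) (f' := fun τ => α • (B τ * G α τ)) (a := 0) (b := s)
      (fun τ _ => hGderiv α τ)
      (((contBG α).const_smul α).intervalIntegrable 0 s)
    rw [hG0 α] at h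
    rw [← h, intervalIntegral.integral_smul]
  -- bound  for B on [0, t]
  obtain ⟨C₀, hC₀⟩ := isCompact_Icc.exists_bound_of_continuousOn (contB.continuousOn (s := Icc (0:ℝ) t))
  set C : ℝ := max C₀ 0 with hCdef
  have hC0 : 0 ≤ C := le_max_right _ _
  have hCB : ∀ s ∈ Icc (0:ℝ) t, ‖B s‖ ≤ C := fun s hs => (hC₀ s hs).trans (le_max_left _ _)
  have hone : ‖(1 : Matrix (Fin n) (Fin n) ℝ)‖ ≤ 1 := by
    rw [← Matrix.diagonal_one, Matrix.linfty_opNorm_diagonal]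
    apply (pi_norm_le_iff_of_nonneg zero_le_one).2
    intro i; simp
  -- Gronwall estimate
  have hGbound : ∀ α : ℝ, ∀ s ∈ Icc (0:ℝ) t, ‖G α s - 1‖ ≤ Real.exp (|α| * C * t) - 1 := by
    intro α s hs
    have key := norm_le_gronwallBound_of_norm_deriv_right_le
      (f := fun s => G α s - 1) (f' := fun s => α • (B s * G α s))
      (δ := 0) (K := |α| * C) (ε := |α| * C) (a := 0) (b := t)
      (((contG α).sub continuous_const).continuousOn)
      (fun x _ => ((hGderiv α x).sub_const 1).hasDerivWithinAt)
      (by simp [hG0]) ?_ s hs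
    · refine key.trans ?_
      rw [sub_zero]
      exact oepd_gronwallBound_le (by positivity) hs.1 hs.2
    · intro x hx
      have h1 : ‖α • (B x * G α x)‖ ≤ |α| * (‖B x‖ * ‖G α x‖) := by
        rw [norm_smul, Real.norm_eq_abs]
        exact mul_le_mul_of_nonneg_left (norm_mul_le _ _) (abs_nonneg α)
      have h2 : ‖G α x‖ ≤ ‖G α x - 1‖ + 1 := by
        calc ‖G α x‖ = ‖(G α x - 1) + 1‖ := by congr 1; abel
          _ ≤ ‖G α x - 1‖ + ‖(1 : Matrix (Fin n) (Fin n) ℝ)‖ := norm_add_le _ _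
          _ ≤ ‖G α x - 1‖ + 1 := by linarith
      have hBx : ‖B x‖ ≤ C := hCB x ⟨hx.1, le_of_lt hx.2⟩
      calc ‖α • (B x * G α x)‖ ≤ |α| * (‖B x‖ * ‖G α x‖) := h1
        _ ≤ |α| * (C * (‖G α x - 1‖ + 1)) := by
            apply mul_le_mul_of_nonneg_left _ (abs_nonneg α)
            exact mul_le_mul hBx h2 (norm_nonneg _) hC0
        _ = |α| * C * ‖G α x - 1‖ + |α| * C := by ring
  -- rewrite the target integral
  have hVeq : (∫ τ in (0:ℝ)..t, Φ 0 t * (Φ 0 τ)⁻¹ * M τ * Φ 0 τ)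
      = Φ 0 t * ∫ τ in (0:ℝ)..t, B τ := by
    have h := (ContinuousLinearMap.mul ℝ (Matrix (Fin n) (Fin n) ℝ) (Φ 0 t)).intervalIntegral_comp_comm
      (contB.intervalIntegrable (μ := MeasureTheory.volume) 0 t)
    simp only [ContinuousLinearMap.mul_apply'] at h
    rw [← h]
    apply intervalIntegral.integral_congr
    intro τ _
    simp [hBdef, hInvdef, mul_assoc]
  have hΦG : ∀ α s : ℝ, Φ α s = Φ 0 s * G α s := by
    intro α s
    rw [hGdef, ← mul_assoc, hmul, one_mul]
  have hGrem : ∀ α : ℝ, G α t - 1 - α • (∫ τ in (0:ℝ)..t, B τ)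
      = α • ∫ τ in (0:ℝ)..t, B τ * (G α τ - 1) := by
    intro α
    rw [hintEq α t, ← smul_sub]
    congr 1
    rw [← intervalIntegral.integral_sub ((contBG α).intervalIntegrable 0 t)
      (contB.intervalIntegrable 0 t)]
    apply intervalIntegral.integral_congr
    intro τ _
    simp [mul_sub]
  -- conclude via little-o
  refine hasDerivAt_iff_isLittleO.2 ?_
  simp only [sub_zero]
  rw [Asymptotics.isLittleO_iff]
  intro c hc
  have hcont : Filter.Tendsto (fun α : ℝ => ‖Φ 0 t‖ * C * t * (Real.exp (|α| * C * t) - 1))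
      (nhds 0) (nhds 0) := by
    have hco : Continuous (fun α : ℝ => ‖Φ 0 t‖ * C * t * (Real.exp (|α| * C * t) - 1)) :=
      continuous_const.mul ((Real.continuous_exp.comp
        ((continuous_abs.mul continuous_const).mul continuous_const)).sub continuous_const)
    simpa using hco.tendsto 0
  filter_upwards [hcont.eventually_lt_const hc] with α hα
  have key : Φ α t - Φ 0 t - α • (∫ τ in (0:ℝ)..t, Φ 0 t * (Φ 0 τ)⁻¹ * M τ * Φ 0 τ)
      = Φ 0 t * (α • ∫ τ in (0:ℝ)..t, B τ * (G α τ - 1)) := by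
    rw [hVeq, hΦG α t, ← hGrem α, mul_sub, mul_sub, mul_one, mul_smul_comm]
  rw [key]
  have hexp0 : (0:ℝ) ≤ Real.exp (|α| * C * t) - 1 := by
    have : (0:ℝ) ≤ |α| * C * t := by positivity
    have := Real.one_le_exp this
    linarith
  have hIbound : ‖∫ τ in (0:ℝ)..t, B τ * (G α τ - 1)‖ ≤ C * (Real.exp (|α| * C * t) - 1) * t := by
    have h := intervalIntegral.norm_integral_le_of_norm_le_const
      (C := C * (Real.exp (|α| * C * t) - 1)) (f := fun τ => B τ * (G α τ - 1)) (a := 0) (b := t) ?_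
    · simpa [abs_of_nonneg ht] using h
    · intro x hx
      rw [Set.uIoc_of_le ht] at hx
      have hxI : x ∈ Icc (0:ℝ) t := ⟨le_of_lt hx.1, hx.2⟩
      calc ‖B x * (G α x - 1)‖ ≤ ‖B x‖ * ‖G α x - 1‖ := norm_mul_le _ _
        _ ≤ C * (Real.exp (|α| * C * t) - 1) :=
            mul_le_mul (hCB x hxI) (hGbound α x hxI) (norm_nonneg _) hC0
  calc ‖Φ 0 t * (α • ∫ τ in (0:ℝ)..t, B τ * (G α τ - 1))‖
      ≤ ‖Φ 0 t‖ * ‖α • ∫ τ in (0:ℝ)..t, B τ * (G α τ - 1)‖ := norm_mul_le _ _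
    _ = ‖Φ 0 t‖ * (|α| * ‖∫ τ in (0:ℝ)..t, B τ * (G α τ - 1)‖) := by
        rw [norm_smul, Real.norm_eq_abs]
    _ ≤ ‖Φ 0 t‖ * (|α| * (C * (Real.exp (|α| * C * t) - 1) * t)) := by
        apply mul_le_mul_of_nonneg_left _ (norm_nonneg _)
        exact mul_le_mul_of_nonneg_left hIbound (abs_nonneg α)
    _ = (‖Φ 0 t‖ * C * t * (Real.exp (|α| * C * t) - 1)) * |α| := by ring
    _ ≤ c * ‖α‖ := by
        rw [Real.norm_eq_abs]
        apply mul_le_mul_of_nonneg_right (le_of_lt hα) (abs_nonneg α)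

/-- Parametric derivative of the ordered exponential: if `Φ_α` solves
`dΦ_α/dt = (L(t) + α M(t)) Φ_α(t)`, `Φ_α(0) = I`, then
`∂_α Φ_α(t)|_{α=0} = ∫₀ᵗ Φ₀(t) Φ₀(τ)⁻¹ M(τ) Φ₀(τ) dτ`. -/
theorem ordered_exponential_parametric_derivative {n : ℕ}
    (L M : ℝ → Matrix (Fin n) (Fin n) ℝ) (hL : Continuous L) (hM : Continuous M)
    (Φ : ℝ → ℝ → Matrix (Fin n) (Fin n) ℝ)
    (hΦ0 : ∀ α : ℝ, Φ α 0 = 1)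
    (hΦ : ∀ α t : ℝ, HasDerivAt (Φ α) ((L t + α • M t) * Φ α t) t)
    (hinv : ∀ t : ℝ, IsUnit (Φ 0 t)) :
    ∀ t : ℝ, HasDerivAt (fun α => Φ α t)
      (∫ τ in (0:ℝ)..t, Φ 0 t * (Φ 0 τ)⁻¹ * M τ * Φ 0 τ) 0 := by
  intro t
  rcases le_or_gt 0 t with ht | ht
  · exact oepd_aux L M hL hM Φ hΦ0 hΦ hinv t ht
  · set L' : ℝ → Matrix (Fin n) (Fin n) ℝ := fun s => -L (-s) with hL'
    set M' : ℝ → Matrix (Fin n) (Fin n) ℝ := fun s => -M (-s) with hM'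
    set Ψ : ℝ → ℝ → Matrix (Fin n) (Fin n) ℝ := fun α s => Φ α (-s) with hΨ
    have hL'c : Continuous L' := (hL.comp continuous_neg).neg
    have hM'c : Continuous M' := (hM.comp continuous_neg).neg
    have hΨ0 : ∀ α, Ψ α 0 = 1 := by intro α; simp only [hΨ, neg_zero, hΦ0]
    have hΨd : ∀ α s : ℝ, HasDerivAt (Ψ α) ((L' s + α • M' s) * Ψ α s) s := by
      intro α s
      have h := (hΦ α (-s)).scomp s (hasDerivAt_neg s)
      refine h.congr_deriv (Eq.symm ?_)
      show (L' s + α • M' s) * Ψ α s = (-1 : ℝ) • ((L (-s) + α • M (-s)) * Φ α (-s))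
      rw [neg_one_smul]
      simp only [hL', hM', hΨ, smul_neg, ← neg_add, neg_mul]
    have hΨinv : ∀ s : ℝ, IsUnit (Ψ 0 s) := fun s => hinv (-s)
    have h := oepd_aux L' M' hL'c hM'c Ψ hΨ0 hΨd hΨinv (-t) (by linarith)
    have hfun : (fun α => Ψ α (-t)) = fun α => Φ α t := by
      funext α; simp only [hΨ, neg_neg]
    rw [hfun] at h
    convert h using 1
    have heq : (∫ σ in (0:ℝ)..(-t), Ψ 0 (-t) * (Ψ 0 σ)⁻¹ * M' σ * Ψ 0 σ)
        = ∫ σ in (0:ℝ)..(-t), -((fun τ => Φ 0 t * (Φ 0 τ)⁻¹ * M τ * Φ 0 τ) (-σ)) := by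
      apply intervalIntegral.integral_congr
      intro σ _
      simp only [hΨ, hM', neg_neg, mul_neg, neg_mul]
    rw [heq, intervalIntegral.integral_neg,
      intervalIntegral.integral_comp_neg (fun τ => Φ 0 t * (Φ 0 τ)⁻¹ * M τ * Φ 0 τ)]
    rw [neg_zero, neg_neg, intervalIntegral.integral_symm]
end

section
/- Let A, B ∈ Mat(n,n,ℝ) and define F(α) = exp(t(A + αB)) for t ∈ ℝ fixed. Then F is differentiable at α = 0 with F'(0) = ∫₀ᵗ exp((t−s)A) · B · exp(sA) ds. -/
attribute [local instance] Matrix.linftyOpNormedRing Matrix.linftyOpNormedAlgebra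

open NormedSpace

section Aux

variable {n : ℕ}

/-- Duhamel's formula. -/
lemma duhamel_aux (A C : Matrix (Fin n) (Fin n) ℝ) (t : ℝ) :
    exp (t • (A + C)) - exp (t • A)
      = ∫ s in (0:ℝ)..t, exp ((t - s) • A) * C * exp (s • (A + C)) := by
  have key : ∀ s : ℝ, HasDerivAt
      (fun s : ℝ => exp ((t - s) • A) * exp (s • (A + C)))
      (exp ((t - s) • A) * C * exp (s • (A + C))) s := by
    intro s
    have h1 : HasDerivAt (fun s : ℝ => exp ((t - s) • A))
        (-(exp ((t - s) • A) * A)) s := by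
      have h0 : HasDerivAt (fun s : ℝ => t - s) (-1) s := by
        simpa using (hasDerivAt_id' s).const_sub t
      have := (hasDerivAt_exp_smul_const A (t - s)).scomp s h0
      exact this.congr_deriv (neg_one_smul ℝ _)
    have h2 : HasDerivAt (fun s : ℝ => exp (s • (A + C)))
        (exp (s • (A + C)) * (A + C)) s := hasDerivAt_exp_smul_const _ s
    have hcomm : exp (s • (A + C)) * (A + C) = (A + C) * exp (s • (A + C)) :=
      (((Commute.refl (A + C)).smul_right s).exp_right).eq.symm
    have := h1.mul h2
    refine this.congr_deriv ?_
    rw [hcomm]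
    noncomm_ring
  have hcont : Continuous fun s : ℝ =>
      exp ((t - s) • A) * C * exp (s • (A + C)) := by
    exact ((exp_continuous.comp (by continuity)).mul continuous_const).mul
      (exp_continuous.comp (by continuity))
  have := intervalIntegral.integral_eq_sub_of_hasDerivAt
    (f := fun s : ℝ => exp ((t - s) • A) * exp (s • (A + C)))
    (fun s _ => key s) (hcont.intervalIntegrable 0 t)
  rw [this]
  simp [exp_zero]

end Aux

/-- Derivative of the matrix exponential with respect to a parameter:
`d/dα exp(t(A + αB))|_{α=0} = ∫₀ᵗ exp((t-s)A) B exp(sA) ds`. -/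
theorem matrix_exp_parametric_derivative {n : ℕ}
    (A B : Matrix (Fin n) (Fin n) ℝ) (t : ℝ) :
    HasDerivAt (fun α : ℝ => exp (t • (A + α • B)))
      (∫ s in (0:ℝ)..t, exp ((t - s) • A) * B * exp (s • A)) 0 := by
  set g : ℝ → Matrix (Fin n) (Fin n) ℝ := fun α =>
    ∫ s in (0:ℝ)..t, exp ((t - s) • A) * B * exp (s • (A + α • B)) with hg
  have hid : ∀ α : ℝ, exp (t • (A + α • B)) - exp (t • A) = α • g α := by
    intro α
    rw [duhamel_aux A (α • B) t, hg, ← intervalIntegral.integral_smul]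
    congr 1
    ext s
    simp only [Matrix.mul_smul, Matrix.smul_mul]
  have hgcont : Continuous g := by
    apply intervalIntegral.continuous_parametric_intervalIntegral_of_continuous
    · have : Continuous fun p : ℝ × ℝ =>
          exp ((t - p.2) • A) * B * exp (p.2 • (A + p.1 • B)) := by
        exact ((exp_continuous.comp (by continuity)).mul continuous_const).mul
          (exp_continuous.comp (by continuity))
      exact this
    · exact continuous_const
  have hg0 : g 0 = ∫ s in (0:ℝ)..t, exp ((t - s) • A) * B * exp (s • A) := by
    simp [hg]
  refine hasDerivAt_iff_tendsto_slope.mpr ?_; rw [← hg0]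
  have heq : slope (fun α : ℝ => exp (t • (A + α • B))) 0 =ᶠ[nhdsWithin 0 {(0:ℝ)}ᶜ] g := by
    filter_upwards [self_mem_nhdsWithin] with α hα
    have hα0 : (α : ℝ) ≠ 0 := hα
    have : exp (t • (A + α • B)) - exp (t • (A + (0:ℝ) • B)) = α • g α := by
      simpa using hid α
    simp only [slope, vsub_eq_sub, sub_zero, this, smul_smul, inv_mul_cancel₀ hα0,
      one_smul]
  exact Filter.Tendsto.congr' heq.symm
    ((hgcont.tendsto 0).mono_left nhdsWithin_le_nhds)
end
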